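/- For every 3-subset U of the vertex set of the icosahedron graph I, the minimum number of cliques of the induced subgraph N_I[U] needed to cover all edges incident to U is at least 6; consequently min over 3-subsets U of θ_E(E_I[U]; N_I[U]) = 6. -/

import Mathlib

open SimpleGraph

/-- The competition graph of a digraph `D` (given as a relation): distinct vertices
`x`, `y` are adjacent iff they have a common out-neighbor in `D`. -/
def CompetitionGraph {V : Type*} (D : V → V → Prop) : SimpleGraph V where
  Adj x y := x ≠ y ∧ ∃ v, D x v ∧ D y v
  symm := ⟨by rintro x y ⟨h, v, hx, hy⟩; exact ⟨h.symm, v, hy, hx⟩⟩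
  loopless := ⟨by rintro x ⟨h, -⟩; exact h rfl⟩

/-- A digraph is acyclic iff it has no directed cycle, i.e. no vertex reaches itself
by a nonempty directed walk. -/
def DigraphAcyclic {V : Type*} (D : V → V → Prop) : Prop :=
  ∀ v, ¬ Relation.TransGen D v v

/-- The graph `G` together with `k` additional isolated vertices. -/
def addIsolated {V : Type*} (G : SimpleGraph V) (k : ℕ) : SimpleGraph (V ⊕ Fin k) where
  Adj a b := ∃ x y, a = Sum.inl x ∧ b = Sum.inl y ∧ G.Adj x y
  symm := ⟨by rintro a b ⟨x, y, rfl, rfl, h⟩; exact ⟨y, x, rfl, rfl, h.symm⟩⟩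
  loopless := ⟨by
    rintro a ⟨x, y, rfl, hy, h⟩
    obtain rfl := Sum.inl_injective hy
    exact (G.ne_of_adj h) rfl⟩

/-- `G` plus `k` isolated vertices is the competition graph of some acyclic digraph. -/
def IsCompetitionWitness {V : Type*} (G : SimpleGraph V) (k : ℕ) : Prop :=
  ∃ D : (V ⊕ Fin k) → (V ⊕ Fin k) → Prop,
    DigraphAcyclic D ∧ CompetitionGraph D = addIsolated G k

/-- The competition number of `G`: the least `k` such that `G` plus `k` isolated
vertices is the competition graph of an acyclic digraph. -/
noncomputable def compNum {V : Type*} (G : SimpleGraph V) : ℕ :=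
  sInf {k | IsCompetitionWitness G k}

/-- The generalized edge clique cover number `θ_E(F; H)`: the minimum number of cliques
of `G` contained in the vertex set `H` (i.e. cliques of the induced subgraph on `H`)
needed so that every edge in `F` has both endpoints in some clique of the family. -/
noncomputable def thetaEOn {V : Type*} (G : SimpleGraph V) (F : Set (Sym2 V)) (H : Set V) : ℕ :=
  sInf {n | ∃ f : Fin n → Set V,
    (∀ i, f i ⊆ H ∧ G.IsClique (f i)) ∧ ∀ e ∈ F, ∃ i, ∀ x ∈ e, x ∈ f i}

/-- The edge clique cover number `θ_E(G)`. -/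
noncomputable def thetaE {V : Type*} (G : SimpleGraph V) : ℕ :=
  thetaEOn G G.edgeSet Set.univ

/-- The vertex clique cover number of the subgraph of `G` induced on `S`: the minimum
number of cliques of `G` contained in `S` whose union covers `S`. -/
noncomputable def thetaVOn {V : Type*} (G : SimpleGraph V) (S : Set V) : ℕ :=
  sInf {n | ∃ f : Fin n → Set V,
    (∀ i, f i ⊆ S ∧ G.IsClique (f i)) ∧ ∀ v ∈ S, ∃ i, v ∈ f i}

/-- The closed neighborhood `N_G[U]` of a vertex subset. -/
def closedNbhd {V : Type*} (G : SimpleGraph V) (U : Set V) : Set V :=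
  U ∪ {v | ∃ u ∈ U, G.Adj u v}

/-- The set `E_G[U]` of edges of `G` with at least one endpoint in `U`. -/
def incidentEdges {V : Type*} (G : SimpleGraph V) (U : Set V) : Set (Sym2 V) :=
  {e | e ∈ G.edgeSet ∧ ∃ x ∈ e, x ∈ U}

/-- The edge list of the icosahedron graph (pentagonal antiprism on `1..10` together
with apexes `0` and `11`). -/
def icosaEdges : List (ℕ × ℕ) :=
  [(0,1),(0,2),(0,3),(0,4),(0,5),(1,2),(2,3),(3,4),(4,5),(5,1),
   (11,6),(11,7),(11,8),(11,9),(11,10),(6,7),(7,8),(8,9),(9,10),(10,6),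
   (1,6),(1,7),(2,7),(2,8),(3,8),(3,9),(4,9),(4,10),(5,10),(5,6)]

/-- The icosahedron graph: the 5-regular graph on 12 vertices with 30 edges
arising as the 1-skeleton of the icosahedron. -/
def Icosahedron : SimpleGraph (Fin 12) :=
  SimpleGraph.fromRel (fun i j => ((i : ℕ), (j : ℕ)) ∈ icosaEdges)


/-! ### Auxiliary machinery -/

instance : DecidableRel Icosahedron.Adj := fun x y =>
  decidable_of_iff _ (SimpleGraph.fromRel_adj _ x y).symm

def nbMask : Fin 12 → ℕ :=
  ![62, 229, 395, 789, 1577, 1107, 3234, 2374, 2700, 3352, 2672, 1984]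

def adjB (x y : Fin 12) : Bool := (nbMask x).testBit y.val

lemma adj_iff : ∀ x y : Fin 12, Icosahedron.Adj x y ↔ adjB x y = true := by decide

lemma k4free : ∀ a b c d : Fin 12,
    ¬(adjB a b = true ∧ adjB a c = true ∧ adjB a d = true ∧
      adjB b c = true ∧ adjB b d = true ∧ adjB c d = true) := by decide

def icosaEdgesF : List (Fin 12 × Fin 12) :=
  [(0,1),(0,2),(0,3),(0,4),(0,5),(1,2),(2,3),(3,4),(4,5),(5,1),
   (11,6),(11,7),(11,8),(11,9),(11,10),(6,7),(7,8),(8,9),(9,10),(10,6),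
   (1,6),(1,7),(2,7),(2,8),(3,8),(3,9),(4,9),(4,10),(5,10),(5,6)]

set_option maxRecDepth 10000 in
lemma icosaEdgesF_adj : ∀ e ∈ icosaEdgesF, Icosahedron.Adj e.1 e.2 := by decide

def hList (U : Finset (Fin 12)) : List (Fin 12) :=
  (List.finRange 12).filter fun v =>
    decide (v ∈ U) || (List.finRange 12).any fun u => decide (u ∈ U) && adjB u v

def edgeList (U : Finset (Fin 12)) : List (Fin 12 × Fin 12) :=
  icosaEdgesF.filter fun e => decide (e.1 ∈ U) || decide (e.2 ∈ U)

def cands (x y : Fin 12) (Hs : List (Fin 12)) : List (List (Fin 12)) :=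
  [x, y] :: (Hs.filter fun t => adjB t x && adjB t y).map fun t => [x, y, t]

def search (Hs : List (Fin 12)) : ℕ → List (Fin 12 × Fin 12) → Bool
  | _, [] => true
  | 0, _ :: _ => false
  | n+1, (x,y) :: rest =>
    (cands x y Hs).any fun D =>
      search Hs n (rest.filter fun e => !(decide (e.1 ∈ D) && decide (e.2 ∈ D)))

lemma mem_hList (U : Finset (Fin 12)) (v : Fin 12) :
    v ∈ closedNbhd Icosahedron (↑U : Set (Fin 12)) → v ∈ hList U := by
  intro hv
  rcases hv with hv | ⟨u, hu, huv⟩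
  · simp [hList]
    exact Or.inl hv
  · simp [hList]
    exact Or.inr ⟨u, hu, (adj_iff u v).1 huv⟩

lemma search_sound (H : Set (Fin 12)) (Hs : List (Fin 12))
    (hHs : ∀ v, v ∈ H → v ∈ Hs) :
    ∀ (n : ℕ) (L : List (Fin 12 × Fin 12)) (T : List (Set (Fin 12))),
      T.length ≤ n →
      (∀ e ∈ L, Icosahedron.Adj e.1 e.2) →
      (∀ C ∈ T, C ⊆ H ∧ Icosahedron.IsClique C) →
      (∀ e ∈ L, ∃ C ∈ T, e.1 ∈ C ∧ e.2 ∈ C) →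
      search Hs n L = true := by
  intro n
  induction n with
  | zero =>
    intro L T hlen hadj hT hcov
    cases L with
    | nil => rfl
    | cons e rest =>
      obtain ⟨C, hC, -⟩ := hcov e (by simp)
      rw [Nat.le_zero, List.length_eq_zero_iff] at hlen
      subst hlen
      exact absurd hC (by simp)
  | succ n ih =>
    intro L T hlen hadj hT hcov
    cases L with
    | nil => rfl
    | cons e rest =>
      obtain ⟨x, y⟩ := e
      have hxy : x ≠ y := (hadj (x,y) (by simp)).ne
      obtain ⟨C, hCT, hx, hy⟩ := hcov (x,y) (by simp)
      obtain ⟨hCH, hCcl⟩ := hT C hCT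
      -- find a candidate D containing C
      have hD : ∃ D ∈ cands x y Hs, ∀ z ∈ C, z ∈ D := by
        by_cases hex : ∃ t ∈ C, t ≠ x ∧ t ≠ y
        · obtain ⟨t, htC, htx, hty⟩ := hex
          refine ⟨[x, y, t], ?_, ?_⟩
          · have htHs : t ∈ Hs := hHs t (hCH htC)
            have h1 : adjB t x = true := (adj_iff t x).1 (hCcl htC hx htx)
            have h2 : adjB t y = true := (adj_iff t y).1 (hCcl htC hy hty)
            exact List.mem_cons_of_mem _
              (List.mem_map.2 ⟨t, List.mem_filter.2 ⟨htHs, by simp [h1, h2]⟩, rfl⟩)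
          · intro z hzC
            by_contra hz
            simp at hz
            obtain ⟨hzx, hzy, hzt⟩ := hz
            have a1 : adjB x y = true := (adj_iff x y).1 (hCcl hx hy hxy)
            have a2 : adjB x t = true := (adj_iff x t).1 (hCcl hx htC (Ne.symm htx))
            have a3 : adjB x z = true := (adj_iff x z).1 (hCcl hx hzC (Ne.symm hzx))
            have a4 : adjB y t = true := (adj_iff y t).1 (hCcl hy htC (Ne.symm hty))
            have a5 : adjB y z = true := (adj_iff y z).1 (hCcl hy hzC (Ne.symm hzy))
            have a6 : adjB t z = true := (adj_iff t z).1 (hCcl htC hzC (Ne.symm hzt))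
            exact k4free x y t z ⟨a1, a2, a3, a4, a5, a6⟩
        · push_neg at hex
          refine ⟨[x, y], List.mem_cons_self, ?_⟩
          intro z hzC
          rcases eq_or_ne z x with rfl | hzx
          · exact List.mem_cons_self
          · have hzy := hex z hzC hzx
            rw [hzy]
            exact List.mem_cons_of_mem _ List.mem_cons_self
      obtain ⟨D, hDc, hCD⟩ := hD
      obtain ⟨T1, T2, rfl⟩ := List.append_of_mem hCT
      show search Hs (n+1) ((x,y) :: rest) = true
      rw [search, List.any_eq_true]
      refine ⟨D, hDc, ?_⟩
      set rest' := rest.filter fun e => !(decide (e.1 ∈ D) && decide (e.2 ∈ D)) with hrest'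
      have hsub : ∀ e ∈ rest', e ∈ rest := fun e he => (List.mem_filter.1 he).1
      apply ih rest' (T1 ++ T2)
      · have := hlen
        simp only [List.length_append, List.length_cons] at this ⊢
        omega
      · intro e he; exact hadj e (by simp [hsub e he])
      · intro C' hC'; exact hT C' (by
          rcases List.mem_append.1 hC' with h | h
          · exact List.mem_append.2 (Or.inl h)
          · exact List.mem_append.2 (Or.inr (List.mem_cons_of_mem _ h)))
      · intro e he
        obtain ⟨C', hC'T, he1, he2⟩ := hcov e (by simp [hsub e he])
        have hC'ne : C' ≠ C := by
          rintro rfl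
          have hf := (List.mem_filter.1 he).2
          have h1 := hCD e.1 he1
          have h2 := hCD e.2 he2
          simp [h1, h2] at hf
        refine ⟨C', ?_, he1, he2⟩
        rcases List.mem_append.1 hC'T with h | h
        · exact List.mem_append.2 (Or.inl h)
        · rcases List.mem_cons.1 h with h | h
          · exact absurd h hC'ne
          · exact List.mem_append.2 (Or.inr h)

set_option maxHeartbeats 4000000 in
theorem key : ∀ a b c : Fin 12, a < b → b < c →
    search (hList {a,b,c}) 5 (edgeList {a,b,c}) = false := by decide

lemma adj_of_mem_edge {e : Sym2 (Fin 12)} (he : e ∈ Icosahedron.edgeSet)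
    {x z : Fin 12} (hx : x ∈ e) (hz : z ∈ e) (hne : x ≠ z) : Icosahedron.Adj x z := by
  induction e using Sym2.ind with
  | _ u v =>
    rw [Sym2.mem_iff] at hx hz
    rw [SimpleGraph.mem_edgeSet] at he
    rcases hx with rfl | rfl <;> rcases hz with rfl | rfl
    · exact absurd rfl hne
    · exact he
    · exact he.symm
    · exact absurd rfl hne

lemma S_nonempty (U : Finset (Fin 12)) :
    {n | ∃ f : Fin n → Set (Fin 12),
      (∀ i, f i ⊆ closedNbhd Icosahedron (↑U : Set (Fin 12)) ∧ Icosahedron.IsClique (f i)) ∧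
      ∀ e ∈ incidentEdges Icosahedron (↑U : Set (Fin 12)), ∃ i, ∀ x ∈ e, x ∈ f i}.Nonempty := by
  classical
  set F := incidentEdges Icosahedron (↑U : Set (Fin 12)) with hF
  have hfin : F.Finite := Set.toFinite F
  set Fs := hfin.toFinset with hFs
  refine ⟨Fs.card, fun i => {z | z ∈ ((Fs.equivFin.symm i : Fs) : Sym2 (Fin 12))}, ?_, ?_⟩
  · intro i
    obtain ⟨heE, x, hxe, hxU⟩ : ((Fs.equivFin.symm i : Fs) : Sym2 (Fin 12)) ∈ F :=
      hfin.mem_toFinset.1 (Fs.equivFin.symm i).2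
    constructor
    · intro z hz
      rcases eq_or_ne z x with rfl | hzx
      · exact Set.mem_union_left _ hxU
      · exact Set.mem_union_right _ ⟨x, hxU, adj_of_mem_edge heE hxe hz (Ne.symm hzx)⟩
    · intro a ha b hb hne
      exact adj_of_mem_edge heE ha hb hne
  · intro e heF
    refine ⟨Fs.equivFin ⟨e, hfin.mem_toFinset.2 heF⟩, ?_⟩
    intro x hx
    simpa [Equiv.symm_apply_apply] using hx

lemma sorted_repr {U : Finset (Fin 12)} (h : U.card = 3) :
    ∃ a b c : Fin 12, a < b ∧ b < c ∧ U = {a, b, c} := by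
  classical
  let f := U.orderIsoOfFin h
  refine ⟨f 0, f 1, f 2, by exact_mod_cast f.strictMono (by decide : (0:Fin 3) < 1),
    by exact_mod_cast f.strictMono (by decide : (1:Fin 3) < 2), ?_⟩
  apply Finset.eq_of_subset_of_card_le
  · intro x hx
    obtain ⟨j, hj⟩ := f.surjective ⟨x, hx⟩
    have hj' := congrArg Subtype.val hj
    rw [Finset.mem_insert, Finset.mem_insert, Finset.mem_singleton]
    fin_cases j
    · exact Or.inl hj'.symm
    · exact Or.inr (Or.inl hj'.symm)
    · exact Or.inr (Or.inr hj'.symm)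
  · rw [h]
    have h01 : (f 0 : Fin 12) ≠ f 1 := by
      intro hh; exact absurd (Subtype.ext hh) (f.injective.ne (by decide))
    have h02 : (f 0 : Fin 12) ≠ f 2 := by
      intro hh; exact absurd (Subtype.ext hh) (f.injective.ne (by decide))
    have h12 : (f 1 : Fin 12) ≠ f 2 := by
      intro hh; exact absurd (Subtype.ext hh) (f.injective.ne (by decide))
    rw [Finset.card_insert_of_notMem (by simp [h01, h02]),
        Finset.card_insert_of_notMem (by simp [h12]), Finset.card_singleton]

lemma lower_bound (U : Finset (Fin 12)) (hU : U.card = 3) :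
    6 ≤ thetaEOn Icosahedron (incidentEdges Icosahedron (↑U : Set (Fin 12)))
          (closedNbhd Icosahedron (↑U : Set (Fin 12))) := by
  obtain ⟨a, b, c, hab, hbc, rfl⟩ := sorted_repr hU
  rw [thetaEOn]
  apply le_csInf (S_nonempty _)
  rintro n ⟨f, hf, hcov⟩
  by_contra hlt
  push_neg at hlt
  have hn5 : n ≤ 5 := by omega
  set U : Finset (Fin 12) := {a, b, c} with hUdef
  set T : List (Set (Fin 12)) := (List.finRange n).map f with hT
  have hmemE : ∀ e ∈ edgeList U, Icosahedron.Adj e.1 e.2 ∧ (e.1 ∈ U ∨ e.2 ∈ U) := by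
    intro e he
    obtain ⟨h1, h2⟩ := List.mem_filter.1 he
    refine ⟨icosaEdgesF_adj e h1, ?_⟩
    simpa using h2
  have hsearch : search (hList U) 5 (edgeList U) = true := by
    apply search_sound (closedNbhd Icosahedron (↑U : Set (Fin 12))) (hList U)
      (mem_hList U) 5 (edgeList U) T
    · simpa [hT] using hn5
    · intro e he; exact (hmemE e he).1
    · intro C hC
      obtain ⟨i, -, rfl⟩ := List.mem_map.1 hC
      exact hf i
    · intro e he
      obtain ⟨hadj, hin⟩ := hmemE e he
      have heF : s(e.1, e.2) ∈ incidentEdges Icosahedron (↑U : Set (Fin 12)) := by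
        refine ⟨(SimpleGraph.mem_edgeSet Icosahedron).2 hadj, ?_⟩
        rcases hin with h | h
        · exact ⟨e.1, Sym2.mem_mk_left _ _, h⟩
        · exact ⟨e.2, Sym2.mem_mk_right _ _, h⟩
      obtain ⟨i, hi⟩ := hcov _ heF
      exact ⟨f i, List.mem_map.2 ⟨i, List.mem_finRange i, rfl⟩,
        hi e.1 (Sym2.mem_mk_left _ _), hi e.2 (Sym2.mem_mk_right _ _)⟩
  rw [key a b c hab hbc] at hsearch
  exact Bool.false_ne_true hsearch

def fs6 : Fin 6 → Finset (Fin 12) :=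
  ![{0,1,2}, {0,3,4}, {0,1,5}, {1,6,7}, {2,3,8}, {2,7,8}]

lemma upper_bound :
    thetaEOn Icosahedron (incidentEdges Icosahedron (↑({0,1,2} : Finset (Fin 12)) : Set (Fin 12)))
      (closedNbhd Icosahedron (↑({0,1,2} : Finset (Fin 12)) : Set (Fin 12))) ≤ 6 := by
  apply Nat.sInf_le
  refine ⟨fun i => (↑(fs6 i) : Set (Fin 12)), fun i => ⟨?_, ?_⟩, ?_⟩
  · intro z hz
    have hz' : z ∈ fs6 i := hz
    have hkey : ∀ i : Fin 6, ∀ z ∈ fs6 i,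
        z ∈ ({0,1,2} : Finset (Fin 12)) ∨
        ∃ u ∈ ({0,1,2} : Finset (Fin 12)), Icosahedron.Adj u z := by decide
    rcases hkey i z hz' with h | ⟨u, hu, ha⟩
    · exact Set.mem_union_left _ h
    · exact Set.mem_union_right _ ⟨u, hu, ha⟩
  · intro p hp q hq hne
    have hkey : ∀ i : Fin 6, ∀ p ∈ fs6 i, ∀ q ∈ fs6 i, p ≠ q → Icosahedron.Adj p q := by decide
    exact hkey i p hp q hq hne
  · intro e he
    induction e using Sym2.ind with
    | _ u v =>
      obtain ⟨heE, x, hxe, hxU⟩ := he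
      rw [SimpleGraph.mem_edgeSet] at heE
      rw [Sym2.mem_iff] at hxe
      have hin : u ∈ ({0,1,2} : Finset (Fin 12)) ∨ v ∈ ({0,1,2} : Finset (Fin 12)) := by
        rcases hxe with rfl | rfl
        · exact Or.inl hxU
        · exact Or.inr hxU
      have hkey : ∀ u v : Fin 12, Icosahedron.Adj u v →
          (u ∈ ({0,1,2} : Finset (Fin 12)) ∨ v ∈ ({0,1,2} : Finset (Fin 12))) →
          ∃ i : Fin 6, u ∈ fs6 i ∧ v ∈ fs6 i := by decide
      obtain ⟨i, hu, hv⟩ := hkey u v heE hin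
      refine ⟨i, ?_⟩
      intro z hz
      rcases Sym2.mem_iff.1 hz with rfl | rfl
      · exact hu
      · exact hv

theorem icosahedron_local_edge_cover_bound :
    (∀ U : Finset (Fin 12), U.card = 3 →
      6 ≤ thetaEOn Icosahedron (incidentEdges Icosahedron (↑U : Set (Fin 12)))
            (closedNbhd Icosahedron (↑U : Set (Fin 12)))) ∧
    sInf ((fun U : Finset (Fin 12) =>
        thetaEOn Icosahedron (incidentEdges Icosahedron (↑U : Set (Fin 12)))
          (closedNbhd Icosahedron (↑U : Set (Fin 12)))) ''
      {U : Finset (Fin 12) | U.card = 3}) = 6 := by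
  have hcard : ({0,1,2} : Finset (Fin 12)).card = 3 := by decide
  refine ⟨lower_bound, le_antisymm ?_ ?_⟩
  · exact (Nat.sInf_le (Set.mem_image_of_mem _
      (show ({0,1,2} : Finset (Fin 12)) ∈ {U : Finset (Fin 12) | U.card = 3} from hcard))).trans
      upper_bound
  · refine le_csInf ⟨_, Set.mem_image_of_mem _
      (show ({0,1,2} : Finset (Fin 12)) ∈ {U : Finset (Fin 12) | U.card = 3} from hcard)⟩ ?_
    rintro m ⟨U, hU, rfl⟩
    exact lower_bound U hU
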